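/- Let G be a monoid acting on a set X, let x_0∈X, and let κ be an infinite cardinal such that the cardinality of G is at most κ and every family 𝒰 of ζ_G-open sets with ⋂𝒰 = {x_0} has cardinality at least κ (i.e., κ ≤ ψ(x_0, ζ_G)), where ζ_G is the Zariski G-topology. Then X contains a special sequence (x_α)_{α<κ} with first term x_0. -/

import Mathlib

open Topology Cardinal

universe u

/-- An injective transfinite sequence `(x_α)_{α<κ}` of points of a `G`-act `X` is *special*
(with least index `i₀`) if there is an enumeration `G = {g_α}_{α<κ}` of the monoid `G` such
that for all `α < κ` and all `β, γ, δ < α`: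
(1) if `g_β • x_{i₀} ≠ g_γ • x_{i₀}` then `g_β • x_α ≠ g_γ • x_α`, and
(2) if `g_β • x_{i₀} ≠ g_γ • x_δ` then `g_β • x_α ≠ g_γ • x_δ`. -/
def IsSpecialSeq (G : Type u) {X : Type u} [Monoid G] [MulAction G X] (κ : Cardinal.{u})
    (x : κ.ord.ToType → X) (i₀ : κ.ord.ToType) : Prop :=
  (∀ i, i₀ ≤ i) ∧ Function.Injective x ∧
  ∃ g : κ.ord.ToType → G, Function.Surjective g ∧
    ∀ α β γ δ : κ.ord.ToType, β < α → γ < α → δ < α →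
      (g β • x i₀ ≠ g γ • x i₀ → g β • x α ≠ g γ • x α) ∧
      (g β • x i₀ ≠ g γ • x δ → g β • x α ≠ g γ • x δ)

/-- A filter `φ` on a `G`-act `X` is *special* (with `⋂ φ = {x₀}`) if for some cardinal `κ`
there is a special sequence `(x_α)_{α<κ}` in `X` with first term `x₀` such that
`⋂ φ = {x₀}` and `{x₀} ∪ {x_β : α < β < κ} ∈ φ` for all `α < κ`. -/
def IsSpecialFilter (G : Type u) {X : Type u} [Monoid G] [MulAction G X]
    (φ : Filter X) (x₀ : X) : Prop :=
  ∃ (κ : Cardinal.{u}) (x : κ.ord.ToType → X) (i₀ : κ.ord.ToType),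
    IsSpecialSeq G κ x i₀ ∧ x i₀ = x₀ ∧ ⋂₀ φ.sets = {x₀} ∧
    ∀ α : κ.ord.ToType, insert x₀ (x '' Set.Ioi α) ∈ φ

/-- The topology `τ_φ`. -/
def tauPhi (G X : Type*) [Monoid G] [MulAction G X] (x₀ : X) (φ : Filter X) :
    TopologicalSpace X where
  IsOpen U := ∀ g : G, g • x₀ ∈ U → {x : X | g • x ∈ U} ∈ φ
  isOpen_univ := fun _ _ => Filter.univ_mem' fun _ => trivial
  isOpen_inter := fun U V hU hV g hg =>
    Filter.inter_mem (hU g hg.1) (hV g hg.2)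
  isOpen_sUnion := fun S hS g hg => by
    obtain ⟨t, htS, hgt⟩ := hg
    exact Filter.mem_of_superset (hS t htS g hgt) fun x hx => ⟨t, htS, hx⟩

/-- The Zariski `G`-topology on a `G`-act `X`. -/
def zariskiGTopology (G X : Type*) [Monoid G] [MulAction G X] : TopologicalSpace X :=
  TopologicalSpace.generateFrom
    ({S : Set X | ∃ f g : G, S = {x : X | f • x ≠ g • x}} ∪
     {S : Set X | ∃ (f : G) (c : X), S = {x : X | f • x ≠ c}})

section Aux

variable {G X : Type u} [Monoid G] [MulAction G X]

lemma zar_open₁ (f g : G) : IsOpen[zariskiGTopology G X] {x : X | f • x ≠ g • x} :=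
  TopologicalSpace.GenerateOpen.basic _ (Or.inl ⟨f, g, rfl⟩)

lemma zar_open₂ (f : G) (c : X) : IsOpen[zariskiGTopology G X] {x : X | f • x ≠ c} :=
  TopologicalSpace.GenerateOpen.basic _ (Or.inr ⟨f, c, rfl⟩)

lemma zar_open₃ (c : X) : IsOpen[zariskiGTopology G X] {x : X | x ≠ c} := by
  have h : {x : X | x ≠ c} = {x : X | (1 : G) • x ≠ c} := by ext x; simp
  rw [h]; exact zar_open₂ 1 c

/-- Key step: at each stage we can pick a new point satisfying all the required
inequalities, since the relevant family of Zariski-open sets has size `< κ`. -/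
lemma key_step (x₀ : X) (κ : Cardinal.{u}) (hκ : ℵ₀ ≤ κ)
    (hψ : ∀ 𝒰 : Set (Set X), (∀ U ∈ 𝒰, IsOpen[zariskiGTopology G X] U) →
      ⋂₀ 𝒰 = {x₀} → κ ≤ #𝒰)
    (g : κ.ord.ToType → G) (α : κ.ord.ToType) (v : κ.ord.ToType → X) :
    ∃ y : X, y ≠ x₀ ∧
      (∀ β γ, β < α → γ < α → g β • x₀ ≠ g γ • x₀ → g β • y ≠ g γ • y) ∧
      (∀ β γ δ, β < α → γ < α → δ < α → g β • x₀ ≠ g γ • v δ → g β • y ≠ g γ • v δ) ∧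
      (∀ δ, δ < α → v δ ≠ x₀ → y ≠ v δ) := by
  classical
  set 𝒰 : Set (Set X) :=
    ({S | ∃ β γ : κ.ord.ToType, β < α ∧ γ < α ∧ g β • x₀ ≠ g γ • x₀ ∧ S = {x | g β • x ≠ g γ • x}} ∪
     {S | ∃ β γ δ : κ.ord.ToType, β < α ∧ γ < α ∧ δ < α ∧ g β • x₀ ≠ g γ • v δ ∧
        S = {x | g β • x ≠ g γ • v δ}}) ∪
    {S | ∃ δ : κ.ord.ToType, δ < α ∧ v δ ≠ x₀ ∧ S = {x | x ≠ v δ}} with h𝒰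
  have hopen : ∀ U ∈ 𝒰, IsOpen[zariskiGTopology G X] U := by
    rintro U ((⟨β, γ, _, _, _, rfl⟩ | ⟨β, γ, δ, _, _, _, _, rfl⟩) | ⟨δ, _, _, rfl⟩)
    exacts [zar_open₁ _ _, zar_open₂ _ _, zar_open₃ _]
  have hx₀ : ∀ U ∈ 𝒰, x₀ ∈ U := by
    rintro U ((⟨β, γ, _, _, h, rfl⟩ | ⟨β, γ, δ, _, _, _, h, rfl⟩) | ⟨δ, _, h, rfl⟩)
    · exact h
    · exact h
    · exact fun e => h e.symm
  have hμ : #{β : κ.ord.ToType // β < α} < κ :=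
    Cardinal.mk_Iio_toType_ord_lt α
  have hcard : #𝒰 < κ := by
    let T := (({β : κ.ord.ToType // β < α} × {γ : κ.ord.ToType // γ < α}) ⊕
      ({β : κ.ord.ToType // β < α} × {γ : κ.ord.ToType // γ < α} × {δ : κ.ord.ToType // δ < α})) ⊕ {δ : κ.ord.ToType // δ < α}
    let Fn : T → Set X := fun t => match t with
      | Sum.inl (Sum.inl (β, γ)) => {x | g β.1 • x ≠ g γ.1 • x}
      | Sum.inl (Sum.inr (β, γ, δ)) => {x | g β.1 • x ≠ g γ.1 • v δ.1}
      | Sum.inr δ => {x | x ≠ v δ.1}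
    have hsub : 𝒰 ⊆ Set.range Fn := by
      rintro S ((⟨β, γ, hβ, hγ, _, rfl⟩ | ⟨β, γ, δ, hβ, hγ, hδ, _, rfl⟩) | ⟨δ, hδ, _, rfl⟩)
      · exact ⟨Sum.inl (Sum.inl (⟨β, hβ⟩, ⟨γ, hγ⟩)), rfl⟩
      · exact ⟨Sum.inl (Sum.inr (⟨β, hβ⟩, ⟨γ, hγ⟩, ⟨δ, hδ⟩)), rfl⟩
      · exact ⟨Sum.inr ⟨δ, hδ⟩, rfl⟩
    calc #𝒰 ≤ #(Set.range Fn) := Cardinal.mk_le_mk_of_subset hsub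
      _ ≤ #T := Cardinal.mk_range_le
      _ < κ := by
        simp only [T, Cardinal.mk_sum, Cardinal.mk_prod, Cardinal.lift_id]
        exact Cardinal.add_lt_of_lt hκ
          (Cardinal.add_lt_of_lt hκ (Cardinal.mul_lt_of_lt hκ hμ hμ)
            (Cardinal.mul_lt_of_lt hκ hμ (Cardinal.mul_lt_of_lt hκ hμ hμ))) hμ
  have hne : ⋂₀ 𝒰 ≠ {x₀} := fun h => absurd (hψ 𝒰 hopen h) (not_le.2 hcard)
  have hsubs : ({x₀} : Set X) ⊆ ⋂₀ 𝒰 := by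
    rintro z hz
    rw [Set.mem_singleton_iff] at hz
    subst hz
    exact fun U hU => hx₀ U hU
  obtain ⟨y, hy𝒰, hy⟩ : ∃ y ∈ ⋂₀ 𝒰, y ≠ x₀ := by
    by_contra h
    push_neg at h
    exact hne (Set.Subset.antisymm (fun z hz => h z hz) hsubs)
  refine ⟨y, hy, ?_, ?_, ?_⟩
  · intro β γ hβ hγ h
    exact hy𝒰 _ (Or.inl (Or.inl ⟨β, γ, hβ, hγ, h, rfl⟩))
  · intro β γ δ hβ hγ hδ h
    exact hy𝒰 _ (Or.inl (Or.inr ⟨β, γ, δ, hβ, hγ, hδ, h, rfl⟩))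
  · intro δ hδ h
    exact hy𝒰 _ (Or.inr ⟨δ, hδ, h, rfl⟩)

end Aux

/-- Let `G` be a monoid acting on a set `X`, `x₀ ∈ X`, and `κ` an infinite cardinal with
`|G| ≤ κ` such that every family `𝒰` of Zariski-open sets with `⋂ 𝒰 = {x₀}` has
cardinality at least `κ` (i.e. `κ ≤ ψ(x₀, ζ_G)`).  Then `X` contains a special sequence
`(x_α)_{α<κ}` with first term `x₀`. -/
theorem exists_specialSeq_of_le_pseudocharacter {G X : Type u} [Monoid G] [MulAction G X]
    (x₀ : X) (κ : Cardinal.{u}) (hκ : ℵ₀ ≤ κ) (hG : #G ≤ κ)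
    (hψ : ∀ 𝒰 : Set (Set X), (∀ U ∈ 𝒰, IsOpen[zariskiGTopology G X] U) →
      ⋂₀ 𝒰 = {x₀} → κ ≤ #𝒰) :
    ∃ (x : κ.ord.ToType → X) (i₀ : κ.ord.ToType),
      IsSpecialSeq G κ x i₀ ∧ x i₀ = x₀ := by
  classical
  have hκ0 : κ.ord ≠ 0 := by
    rw [Ne, Cardinal.ord_eq_zero]
    rintro rfl
    exact Cardinal.aleph0_pos.not_ge hκ
  haveI hne : Nonempty κ.ord.ToType := Ordinal.nonempty_toType_iff.2 hκ0
  have hwf : WellFounded ((· < ·) : κ.ord.ToType → κ.ord.ToType → Prop) := wellFounded_lt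
  set i₀ : κ.ord.ToType := hwf.min Set.univ ⟨Classical.arbitrary _, Set.mem_univ _⟩ with hi₀
  have hle : ∀ i, i₀ ≤ i := fun i => not_lt.1 (hwf.not_lt_min _ (Set.mem_univ i))
  -- the enumeration of `G`
  have hGI : #G ≤ #(κ.ord.ToType) := by
    rw [Cardinal.mk_toType, Cardinal.card_ord]; exact hG
  obtain ⟨e⟩ := (Cardinal.le_def G κ.ord.ToType).1 hGI
  set g : κ.ord.ToType → G := Function.invFun e with hg
  have hgsurj : Function.Surjective g := Function.invFun_surjective e.injective
  -- the recursive construction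
  let F : ∀ α : κ.ord.ToType, (∀ β : κ.ord.ToType, β < α → X) → X := fun α ih =>
    if α = i₀ then x₀
    else Classical.choose (key_step x₀ κ hκ hψ g α fun β => if h : β < α then ih β h else x₀)
  let x : κ.ord.ToType → X := fun α => hwf.fix F α
  have hfix : ∀ α : κ.ord.ToType, x α = if α = i₀ then x₀
      else Classical.choose (key_step x₀ κ hκ hψ g α fun β => if _ : β < α then x β else x₀) :=
    fun α => hwf.fix_eq F α
  have hx0 : x i₀ = x₀ := by rw [hfix]; simp
  have hspec : ∀ α : κ.ord.ToType, α ≠ i₀ →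
      x α ≠ x₀ ∧
      (∀ β γ, β < α → γ < α → g β • x₀ ≠ g γ • x₀ → g β • x α ≠ g γ • x α) ∧
      (∀ β γ δ, β < α → γ < α → δ < α → g β • x₀ ≠ g γ • x δ → g β • x α ≠ g γ • x δ) ∧
      (∀ δ, δ < α → x δ ≠ x₀ → x α ≠ x δ) := by
    intro α hα
    have h1 := hfix α
    rw [if_neg hα] at h1
    have h2 := Classical.choose_spec
      (key_step x₀ κ hκ hψ g α fun β => if _ : β < α then x β else x₀)
    rw [← h1] at h2
    obtain ⟨ha, hb, hc, hd⟩ := h2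
    refine ⟨ha, hb, ?_, ?_⟩
    · intro β γ δ hβ hγ hδ h
      have hcs := hc β γ δ hβ hγ hδ
      simp only [dif_pos hδ] at hcs
      exact hcs h
    · intro δ hδ h
      have hds := hd δ hδ
      simp only [dif_pos hδ] at hds
      exact hds h
  have hinj' : ∀ a b : κ.ord.ToType, b < a → x a ≠ x b := by
    intro a b hba
    have hai : a ≠ i₀ := by
      rintro rfl
      exact absurd (hle b) (not_le.2 hba)
    obtain ⟨ha, _, _, hd⟩ := hspec a hai
    by_cases hbx : x b = x₀
    · rw [hbx]; exact ha
    · exact hd b hba hbx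
  have hinj : Function.Injective x := by
    intro a b hab
    rcases lt_trichotomy a b with h | h | h
    · exact absurd hab.symm (hinj' b a h)
    · exact h
    · exact absurd hab (hinj' a b h)
  refine ⟨x, i₀, ⟨hle, hinj, g, hgsurj, ?_⟩, hx0⟩
  intro α β γ δ hβ hγ hδ
  have hα : α ≠ i₀ := by
    rintro rfl
    exact absurd (hle β) (not_le.2 hβ)
  obtain ⟨_, hb, hc, _⟩ := hspec α hα
  rw [hx0]
  exact ⟨hb β γ hβ hγ, hc β γ δ hβ hγ hδ⟩
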